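/- arXiv:2207.06005 — 2 statements merged into one kernel-verified Lean document; each statement's English description precedes it below -/
import Mathlib

section
/- Let q ≥ 0 be an integer. If two groups G and H are weak q-exterior isoclinic, then M^q(G) ≅ M^q(H). In particular, the q-Schur multiplier M^q is invariant under q-exterior isoclinism. -/
/-!
Nonabelian tensor square modulo `q` (Conduché–Ellis / Brown–Loday for `q = 0`),
presented by generators `g ⊗ h` and `{(g,g)}` with the defining relations.
-/

namespace QTensor

/-- Generators of the `q`-tensor square: `t g h` stands for `g ⊗ h`,
and `d g` stands for the symbol `{(g,g)}`. -/
inductive Gen (G : Type) : Type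
  | t : G → G → Gen G
  | d : G → Gen G

variable (G : Type) [Group G]

/-- The word `g ⊗ h` in the free group on the generators. -/
def T (g h : G) : FreeGroup (Gen G) := FreeGroup.of (Gen.t g h)

/-- The word `{(g,g)}` in the free group on the generators. -/
def D (g : G) : FreeGroup (Gen G) := FreeGroup.of (Gen.d g)

/-- The word `∏_{i=1}^{q-1} (g⁻¹ ⊗ (^(g^(1-q+i)) g₁)^i)` appearing in relation (4). -/
def relProd (q : ℕ) (g g₁ : G) : FreeGroup (Gen G) :=
  ((List.range (q - 1)).map (fun j =>
    T G g⁻¹ ((g ^ ((1 : ℤ) - (q : ℤ) + (j + 1 : ℕ)) * g₁ *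
      (g ^ ((1 : ℤ) - (q : ℤ) + (j + 1 : ℕ)))⁻¹) ^ (j + 1)))).prod

/-- The defining relations of the `q`-tensor square.  For `q = 0` the symbols
`{(g,g)}` are killed, so that the group is the Brown–Loday nonabelian tensor
square generated by the `g ⊗ h` subject to relations (1) and (2). -/
def rels (q : ℕ) : Set (FreeGroup (Gen G)) :=
  {r | ∃ g g₁ h : G,
      r = T G (g * g₁) h * (T G (g * g₁ * g⁻¹) (g * h * g⁻¹) * T G g h)⁻¹} ∪
  {r | ∃ g h h₁ : G,
      r = T G g (h * h₁) * (T G g h * T G (h * g * h⁻¹) (h * h₁ * h⁻¹))⁻¹} ∪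
  {r | ∃ g g₁ h₁ : G,
      r = D G g * T G g₁ h₁ * (D G g)⁻¹ *
        (T G (g ^ q * g₁ * (g ^ q)⁻¹) (g ^ q * h₁ * (g ^ q)⁻¹))⁻¹} ∪
  {r | ∃ g g₁ : G,
      r = D G (g * g₁) * (D G g * relProd G q g g₁ * D G g₁)⁻¹} ∪
  {r | ∃ g g₁ : G,
      r = D G g * D G g₁ * (D G g)⁻¹ * (D G g₁)⁻¹ * (T G (g ^ q) (g₁ ^ q))⁻¹} ∪
  {r | ∃ g h : G,
      r = D G (g * h * g⁻¹ * h⁻¹) * ((T G g h) ^ q)⁻¹} ∪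
  {r | q = 0 ∧ ∃ g : G, r = D G g}

/-- The nonabelian tensor square modulo `q`, `G ⊗^q G`. -/
def tensorSquare (q : ℕ) : Type := PresentedGroup (rels G q)

instance (q : ℕ) : Group (tensorSquare G q) := by unfold tensorSquare; infer_instance

/-- The element `g ⊗ h` of `G ⊗^q G`. -/
def tmk (q : ℕ) (g h : G) : tensorSquare G q := PresentedGroup.of (Gen.t g h)

/-- The element `{(g,g)}` of `G ⊗^q G`. -/
def dmk (q : ℕ) (g : G) : tensorSquare G q := PresentedGroup.of (Gen.d g)

/-- `∇^q(G)`, the normal closure of the elements `g ⊗ g` in `G ⊗^q G`. -/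
def nabla (q : ℕ) : Subgroup (tensorSquare G q) :=
  Subgroup.normalClosure {x | ∃ g : G, x = tmk G q g g}

instance (q : ℕ) : (nabla G q).Normal := Subgroup.normalClosure_normal

/-- The exterior square modulo `q`, `G ∧^q G = (G ⊗^q G)/∇^q(G)`. -/
def extSquare (q : ℕ) : Type := tensorSquare G q ⧸ nabla G q

instance (q : ℕ) : Group (extSquare G q) := by unfold extSquare; infer_instance

/-- The element `g ∧ h` of `G ∧^q G`. -/
def wmk (q : ℕ) (g h : G) : extSquare G q := QuotientGroup.mk (tmk G q g h)

/-- The image of the symbol `{(g,g)}` in `G ∧^q G`. -/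
def dwmk (q : ℕ) (g : G) : extSquare G q := QuotientGroup.mk (dmk G q g)

/-- The exterior centre variant `Z^∧_q(G) = {g : g ∧ h = 1 for all h}` (as a set). -/
def Zext (q : ℕ) : Set G := {g | ∀ h : G, wmk G q g h = 1}

/-- `E^∧_q(G) = {g ∈ Z^∧_q(G) : {(g,g)} = 1 in G ∧^q G}` (as a set); for `q = 0`
the second condition is automatic, so `E^∧_0(G) = Z^∧(G)`. -/
def Eext (q : ℕ) : Set G := {g | (∀ h : G, wmk G q g h = 1) ∧ dwmk G q g = 1}

/-- The subgroup `G^q[G,G]` generated by all `q`-th powers and all commutators. -/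
def qPowComm (q : ℕ) : Subgroup G :=
  Subgroup.closure ({x | ∃ g : G, x = g ^ q} ∪ {x | ∃ a b : G, x = a * b * a⁻¹ * b⁻¹})

theorem pow_mem_qPowComm (q : ℕ) (g : G) : g ^ q ∈ qPowComm G q :=
  Subgroup.subset_closure (Or.inl ⟨g, rfl⟩)

theorem commutator_mem_qPowComm (q : ℕ) (a b : G) :
    a * b * a⁻¹ * b⁻¹ ∈ qPowComm G q :=
  Subgroup.subset_closure (Or.inr ⟨a, b, rfl⟩)

open scoped commutatorElement in
theorem mem_commutator (a b : G) : ⁅a, b⁆ ∈ commutator G :=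
  Subgroup.commutator_mem_commutator (Subgroup.mem_top a) (Subgroup.mem_top b)

/-- `M₀^q(G)`: the subgroup of `G ∧^q G` generated by the `x ∧ y` with `[x,y] = 1`.
(It is contained in the `q`-Schur multiplier `M^q(G)`.) -/
def M0 (q : ℕ) : Subgroup (extSquare G q) :=
  Subgroup.closure {x | ∃ a b : G, a * b = b * a ∧ x = wmk G q a b}

/-- `M̂₀^q(G)`: the subgroup of `G ∧^q G` generated by the `x ∧ y` with `[x,y] = 1`
together with the `{(g,g)}` with `g^q = 1`. -/
def M0hat (q : ℕ) : Subgroup (extSquare G q) :=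
  Subgroup.closure
    ({x | ∃ a b : G, a * b = b * a ∧ x = wmk G q a b} ∪
     {x | ∃ g : G, g ^ q = 1 ∧ x = dwmk G q g})

/-- A group `Q` is capable if `Q ≅ E/Z(E)` for some group `E`. -/
def Capable (Q : Type) [Group Q] : Prop :=
  ∃ (E : Type) (_ : Group E), Nonempty (Q ≃* E ⧸ Subgroup.center E)

-- ====================== new development ======================

variable {G}

/-- The canonical homomorphism from the free group to the exterior square. -/
def fmk (q : ℕ) : FreeGroup (Gen G) →* extSquare G q :=
  (QuotientGroup.mk' (nabla G q)).comp (PresentedGroup.mk (rels G q))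

lemma fmk_T (q : ℕ) (g h : G) : fmk q (T G g h) = wmk G q g h := rfl
lemma fmk_D (q : ℕ) (g : G) : fmk q (D G g) = dwmk G q g := rfl

lemma fmk_surjective (q : ℕ) : Function.Surjective (fmk (G := G) q) :=
  (QuotientGroup.mk'_surjective (nabla G q)).comp (PresentedGroup.mk_surjective (rels G q))

lemma fmk_rel (q : ℕ) {r : FreeGroup (Gen G)} (hr : r ∈ rels G q) : fmk q r = 1 := by
  have h1 : (PresentedGroup.mk (rels G q) r : tensorSquare G q) = 1 :=
    (QuotientGroup.eq_one_iff _).mpr (Subgroup.subset_normalClosure hr)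
  show (QuotientGroup.mk' (nabla G q)) (PresentedGroup.mk (rels G q) r) = 1
  rw [h1]
  exact map_one _

lemma wmk_self (q : ℕ) (g : G) : wmk G q g g = 1 :=
  (QuotientGroup.eq_one_iff _).mpr (Subgroup.subset_normalClosure ⟨g, rfl⟩)

lemma wrel1 (q : ℕ) (g g₁ h : G) :
    wmk G q (g * g₁) h = wmk G q (g * g₁ * g⁻¹) (g * h * g⁻¹) * wmk G q g h := by
  have := fmk_rel q (G := G) (r := T G (g * g₁) h *
      (T G (g * g₁ * g⁻¹) (g * h * g⁻¹) * T G g h)⁻¹)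
    (Or.inl <| Or.inl <| Or.inl <| Or.inl <| Or.inl <| Or.inl ⟨g, g₁, h, rfl⟩)
  simp only [map_mul, map_inv, fmk_T] at this
  exact mul_inv_eq_one.mp this

lemma wrel2 (q : ℕ) (g h h₁ : G) :
    wmk G q g (h * h₁) = wmk G q g h * wmk G q (h * g * h⁻¹) (h * h₁ * h⁻¹) := by
  have := fmk_rel q (G := G) (r := T G g (h * h₁) *
      (T G g h * T G (h * g * h⁻¹) (h * h₁ * h⁻¹))⁻¹)
    (Or.inl <| Or.inl <| Or.inl <| Or.inl <| Or.inl <| Or.inr ⟨g, h, h₁, rfl⟩)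
  simp only [map_mul, map_inv, fmk_T] at this
  exact mul_inv_eq_one.mp this

lemma wrel3 (q : ℕ) (g g₁ h₁ : G) :
    dwmk G q g * wmk G q g₁ h₁ * (dwmk G q g)⁻¹ =
      wmk G q (g ^ q * g₁ * (g ^ q)⁻¹) (g ^ q * h₁ * (g ^ q)⁻¹) := by
  have := fmk_rel q (G := G) (r := D G g * T G g₁ h₁ * (D G g)⁻¹ *
        (T G (g ^ q * g₁ * (g ^ q)⁻¹) (g ^ q * h₁ * (g ^ q)⁻¹))⁻¹)
    (Or.inl <| Or.inl <| Or.inl <| Or.inl <| Or.inr ⟨g, g₁, h₁, rfl⟩)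
  simp only [map_mul, map_inv, fmk_T, fmk_D] at this
  exact mul_inv_eq_one.mp this

lemma wrel4 (q : ℕ) (g g₁ : G) :
    dwmk G q (g * g₁) = dwmk G q g * fmk q (relProd G q g g₁) * dwmk G q g₁ := by
  have := fmk_rel q (G := G) (r := D G (g * g₁) * (D G g * relProd G q g g₁ * D G g₁)⁻¹)
    (Or.inl <| Or.inl <| Or.inl <| Or.inr ⟨g, g₁, rfl⟩)
  simp only [map_mul, map_inv, fmk_D] at this
  exact mul_inv_eq_one.mp this

lemma wrel5 (q : ℕ) (g g₁ : G) :
    dwmk G q g * dwmk G q g₁ * (dwmk G q g)⁻¹ * (dwmk G q g₁)⁻¹ =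
      wmk G q (g ^ q) (g₁ ^ q) := by
  have := fmk_rel q (G := G)
    (r := D G g * D G g₁ * (D G g)⁻¹ * (D G g₁)⁻¹ * (T G (g ^ q) (g₁ ^ q))⁻¹)
    (Or.inl <| Or.inl <| Or.inr ⟨g, g₁, rfl⟩)
  simp only [map_mul, map_inv, fmk_T, fmk_D] at this
  exact mul_inv_eq_one.mp this

lemma wrel6 (q : ℕ) (g h : G) :
    dwmk G q (g * h * g⁻¹ * h⁻¹) = (wmk G q g h) ^ q := by
  have := fmk_rel q (G := G) (r := D G (g * h * g⁻¹ * h⁻¹) * ((T G g h) ^ q)⁻¹)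
    (Or.inl <| Or.inr ⟨g, h, rfl⟩)
  simp only [map_mul, map_inv, map_pow, fmk_T, fmk_D] at this
  exact mul_inv_eq_one.mp this

lemma wrel7 (g : G) (h : G) : dwmk G 0 g = 1 := by
  have := fmk_rel 0 (G := G) (r := D G g) (Or.inr ⟨rfl, g, rfl⟩)
  simpa [fmk_D] using this

lemma wmk_mul_swap (q : ℕ) (a x : G) : wmk G q x a * wmk G q a x = 1 := by
  have key : ∀ b : G, wmk G q (a * b * a⁻¹) a * wmk G q a (a * b * a⁻¹) = 1 := by
    intro b
    have h1 : wmk G q (a * b) (a * b) = 1 := wmk_self q _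
    rw [wrel1 q a b (a * b)] at h1
    have h2 : wmk G q a (a * b) = wmk G q a (a * b * a⁻¹) := by
      have h := wrel2 q a a b
      rw [wmk_self, one_mul] at h
      rw [h]
      congr 1
      group
    have h3 : wmk G q (a * b * a⁻¹) (a * (a * b) * a⁻¹) = wmk G q (a * b * a⁻¹) a := by
      have h := wrel2 q (a * b * a⁻¹) a (a * b * a⁻¹)
      have e1 : a * (a * b) * a⁻¹ = a * (a * b * a⁻¹) := by group
      have e2 : a * (a * b * a⁻¹) * a⁻¹ = a * a * b * a⁻¹ * a⁻¹ := by group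
      rw [e1, h, e2]
      have : wmk G q (a * a * b * a⁻¹ * a⁻¹) (a * a * b * a⁻¹ * a⁻¹) = 1 := wmk_self q _
      rw [this, mul_one]
    rw [h2, h3] at h1
    exact h1
  have := key (a⁻¹ * x * a)
  have e : a * (a⁻¹ * x * a) * a⁻¹ = x := by group
  rwa [e] at this

lemma wmk_swap (q : ℕ) (a b : G) : wmk G q a b = (wmk G q b a)⁻¹ :=
  eq_inv_of_mul_eq_one_left (wmk_mul_swap q b a)


section WellDefined

variable {H : Type} [Group H] (q : ℕ) (B : Subgroup H) [B.Normal]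
  (hB : (B : Set H) ⊆ Eext H q)

include hB

lemma zleft {b : H} (hb : b ∈ B) (x : H) : wmk H q b x = 1 := (hB hb).1 x

lemma zright {b : H} (hb : b ∈ B) (x : H) : wmk H q x b = 1 := by
  rw [wmk_swap, zleft q B hB hb, inv_one]

lemma dzero {b : H} (hb : b ∈ B) : dwmk H q b = 1 := (hB hb).2

lemma wd_left {b : H} (hb : b ∈ B) (g h : H) : wmk H q (g * b) h = wmk H q g h := by
  rw [wrel1 q g b h, zleft q B hB (Subgroup.Normal.conj_mem ‹B.Normal› b hb g), one_mul]

lemma wd_right {b : H} (hb : b ∈ B) (g h : H) : wmk H q g (h * b) = wmk H q g h := by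
  rw [wrel2 q g h b, zright q B hB (Subgroup.Normal.conj_mem ‹B.Normal› b hb h), mul_one]

lemma wd {a a' b b' : H} (ha : (QuotientGroup.mk a : H ⧸ B) = QuotientGroup.mk a')
    (hb : (QuotientGroup.mk b : H ⧸ B) = QuotientGroup.mk b') :
    wmk H q a b = wmk H q a' b' := by
  have ha' : a' = a * (a⁻¹ * a') := by group
  have hb' : b' = b * (b⁻¹ * b') := by group
  rw [ha', hb', wd_left q B hB (QuotientGroup.eq.mp ha),
    wd_right q B hB (QuotientGroup.eq.mp hb)]

lemma fmk_relProd_eq_one {b : H} (hb : b ∈ B) (g : H) :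
    fmk q (relProd H q g b) = 1 := by
  unfold relProd
  rw [map_list_prod, List.map_map]
  apply List.prod_eq_one
  intro x hx
  rw [List.mem_map] at hx
  obtain ⟨j, -, rfl⟩ := hx
  show fmk q (T H g⁻¹ _) = 1
  rw [fmk_T]
  exact zright q B hB (Subgroup.pow_mem B
    (Subgroup.Normal.conj_mem ‹B.Normal› b hb _) _) _

lemma dwd {a a' : H} (ha : (QuotientGroup.mk a : H ⧸ B) = QuotientGroup.mk a') :
    dwmk H q a = dwmk H q a' := by
  have ha' : a' = a * (a⁻¹ * a') := by group
  have hmem : a⁻¹ * a' ∈ B := QuotientGroup.eq.mp ha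
  rw [ha', wrel4 q a (a⁻¹ * a'), dzero q B hB hmem, mul_one,
    fmk_relProd_eq_one q B hB hmem, mul_one]

end WellDefined


section Construction

variable {H : Type} [Group H]

/-- A choice of representative for `τ g`. -/
noncomputable def rep {B : Subgroup H} [B.Normal] (τ : G →* H ⧸ B) (g : G) : H :=
  Quotient.out (τ g)

lemma mk_rep {B : Subgroup H} [B.Normal] (τ : G →* H ⧸ B) (g : G) :
    (QuotientGroup.mk (rep τ g) : H ⧸ B) = τ g :=
  QuotientGroup.out_eq' (τ g)

/-- The images of the generators under the induced map. -/
noncomputable def liftGen (q : ℕ) {B : Subgroup H} [B.Normal] (τ : G →* H ⧸ B) :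
    Gen G → extSquare H q
  | .t g h => wmk H q (rep τ g) (rep τ h)
  | .d g => dwmk H q (rep τ g)

lemma lift_T (q : ℕ) {B : Subgroup H} [B.Normal] (τ : G →* H ⧸ B) (g h : G) :
    FreeGroup.lift (liftGen q τ) (T G g h) = wmk H q (rep τ g) (rep τ h) :=
  FreeGroup.lift_apply_of

lemma lift_D (q : ℕ) {B : Subgroup H} [B.Normal] (τ : G →* H ⧸ B) (g : G) :
    FreeGroup.lift (liftGen q τ) (D G g) = dwmk H q (rep τ g) :=
  FreeGroup.lift_apply_of

variable (q : ℕ) (B : Subgroup H) [B.Normal] (hB : (B : Set H) ⊆ Eext H q)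
  (τ : G →* H ⧸ B)

include hB

lemma lift_relProd (g g₁ : G) :
    FreeGroup.lift (liftGen q τ) (relProd G q g g₁) =
      fmk q (relProd H q (rep τ g) (rep τ g₁)) := by
  unfold relProd
  rw [map_list_prod, map_list_prod, List.map_map, List.map_map]
  congr 1
  apply List.map_congr_left
  intro j hj
  show FreeGroup.lift (liftGen q τ) (T G g⁻¹ _) = fmk q (T H (rep τ g)⁻¹ _)
  rw [lift_T, fmk_T]
  apply wd q B hB
  · simp only [mk_rep, map_inv, QuotientGroup.mk_inv]
  · simp only [mk_rep, map_pow, map_mul, map_inv, map_zpow, QuotientGroup.mk_pow,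
      QuotientGroup.mk_mul, QuotientGroup.mk_inv, QuotientGroup.mk_zpow]

lemma lift_rels : ∀ r ∈ rels G q, FreeGroup.lift (liftGen q τ) r = 1 := by
  rintro r ((((((⟨g, g₁, h, rfl⟩ | ⟨g, h, h₁, rfl⟩) | ⟨g, g₁, h₁, rfl⟩) |
      ⟨g, g₁, rfl⟩) | ⟨g, g₁, rfl⟩) | ⟨g, h, rfl⟩) | ⟨hq, g, rfl⟩)
  · simp only [map_mul, map_inv, lift_T]
    rw [mul_inv_eq_one]
    rw [wd q B hB (a' := rep τ g * rep τ g₁) (b' := rep τ h)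
        (by simp [mk_rep, map_mul]) rfl,
      wd q B hB (a := rep τ (g * g₁ * g⁻¹)) (a' := rep τ g * rep τ g₁ * (rep τ g)⁻¹)
        (b := rep τ (g * h * g⁻¹)) (b' := rep τ g * rep τ h * (rep τ g)⁻¹)
        (by simp [mk_rep, map_mul, map_inv]) (by simp [mk_rep, map_mul, map_inv])]
    exact wrel1 q _ _ _
  · simp only [map_mul, map_inv, lift_T]
    rw [mul_inv_eq_one]
    rw [wd q B hB (a := rep τ g) (a' := rep τ g) (b := rep τ (h * h₁))
        (b' := rep τ h * rep τ h₁) rfl (by simp [mk_rep, map_mul]),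
      wd q B hB (a := rep τ (h * g * h⁻¹)) (a' := rep τ h * rep τ g * (rep τ h)⁻¹)
        (b := rep τ (h * h₁ * h⁻¹)) (b' := rep τ h * rep τ h₁ * (rep τ h)⁻¹)
        (by simp [mk_rep, map_mul, map_inv]) (by simp [mk_rep, map_mul, map_inv])]
    exact wrel2 q _ _ _
  · simp only [map_mul, map_inv, lift_T, lift_D]
    rw [mul_inv_eq_one]
    rw [wd q B hB (a := rep τ (g ^ q * g₁ * (g ^ q)⁻¹))
        (a' := (rep τ g) ^ q * rep τ g₁ * ((rep τ g) ^ q)⁻¹)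
        (b := rep τ (g ^ q * h₁ * (g ^ q)⁻¹))
        (b' := (rep τ g) ^ q * rep τ h₁ * ((rep τ g) ^ q)⁻¹)
        (by simp [mk_rep, map_mul, map_inv, map_pow])
        (by simp [mk_rep, map_mul, map_inv, map_pow])]
    exact wrel3 q _ _ _
  · simp only [map_mul, map_inv, lift_D, lift_relProd q B hB τ]
    rw [mul_inv_eq_one]
    rw [dwd q B hB (a := rep τ (g * g₁)) (a' := rep τ g * rep τ g₁)
        (by simp [mk_rep, map_mul])]
    exact wrel4 q _ _
  · simp only [map_mul, map_inv, lift_T, lift_D]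
    rw [mul_inv_eq_one]
    rw [wd q B hB (a := rep τ (g ^ q)) (a' := (rep τ g) ^ q)
        (b := rep τ (g₁ ^ q)) (b' := (rep τ g₁) ^ q)
        (by simp [mk_rep, map_pow]) (by simp [mk_rep, map_pow])]
    exact wrel5 q _ _
  · simp only [map_mul, map_inv, map_pow, lift_T, lift_D]
    rw [mul_inv_eq_one]
    rw [dwd q B hB (a := rep τ (g * h * g⁻¹ * h⁻¹))
        (a' := rep τ g * rep τ h * (rep τ g)⁻¹ * (rep τ h)⁻¹)
        (by simp [mk_rep, map_mul, map_inv])]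
    exact wrel6 q _ _
  · subst hq
    simp only [lift_D]
    exact wrel7 _ 1

/-- The induced homomorphism `G ∧^q G →* H ∧^q H`. -/
noncomputable def Phi : extSquare G q →* extSquare H q :=
  QuotientGroup.lift (nabla G q) (PresentedGroup.toGroup (lift_rels q B hB τ))
    (by
      haveI := MonoidHom.normal_ker (PresentedGroup.toGroup (lift_rels q B hB τ))
      refine @Subgroup.normalClosure_le_normal _ _ _ _ this ?_
      rintro x ⟨g, rfl⟩
      show PresentedGroup.toGroup (lift_rels q B hB τ) (tmk G q g g) = 1
      rw [show tmk G q g g = PresentedGroup.of (Gen.t g g) from rfl,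
        PresentedGroup.toGroup.of]
      exact wmk_self q _)

lemma Phi_wmk (g h : G) :
    Phi q B hB τ (wmk G q g h) = wmk H q (rep τ g) (rep τ h) := by
  show QuotientGroup.lift _ _ _ (QuotientGroup.mk _) = _
  refine Eq.trans (QuotientGroup.lift_mk ..) ?_
  exact PresentedGroup.toGroup.of _

lemma Phi_dwmk (g : G) :
    Phi q B hB τ (dwmk G q g) = dwmk H q (rep τ g) := by
  show QuotientGroup.lift _ _ _ (QuotientGroup.mk _) = _
  refine Eq.trans (QuotientGroup.lift_mk ..) ?_
  exact PresentedGroup.toGroup.of _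

end Construction

/-- Two homomorphisms out of the exterior square agree if they agree on generators. -/
lemma hom_ext {M : Type*} [Group M] (q : ℕ) {φ ψ : extSquare G q →* M}
    (h1 : ∀ g h : G, φ (wmk G q g h) = ψ (wmk G q g h))
    (h2 : ∀ g : G, φ (dwmk G q g) = ψ (dwmk G q g)) : φ = ψ := by
  have key : φ.comp (fmk q) = ψ.comp (fmk q) := by
    apply MonoidHom.ext
    intro w
    induction w using FreeGroup.induction_on with
    | C1 => simp
    | of x =>
      rcases x with ⟨g, h⟩ | g
      · exact h1 g h
      · exact h2 g
    | inv_of x ih => simp only [map_inv, ih]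
    | mul x y ihx ihy => simp only [map_mul, ihx, ihy]
  apply MonoidHom.ext
  intro x
  obtain ⟨w, rfl⟩ := fmk_surjective q x
  exact DFunLike.congr_fun key w

/-- Every element of the exterior square can be obtained from generators; hence the
image of `η` lands in `qPowComm`. -/
lemma eta_mem_qPowComm (q : ℕ) (ηG : extSquare G q →* G)
    (hηG1 : ∀ g h : G, ηG (wmk G q g h) = g * h * g⁻¹ * h⁻¹)
    (hηG2 : ∀ g : G, ηG (dwmk G q g) = g ^ q) (x : extSquare G q) :
    ηG x ∈ qPowComm G q := by
  obtain ⟨w, rfl⟩ := fmk_surjective q x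
  induction w using FreeGroup.induction_on with
  | C1 => simp only [map_one]; exact one_mem _
  | of x =>
    rcases x with ⟨g, h⟩ | g
    · show ηG (wmk G q g h) ∈ _
      rw [hηG1]
      exact commutator_mem_qPowComm G q g h
    · show ηG (dwmk G q g) ∈ _
      rw [hηG2]
      exact pow_mem_qPowComm G q g
  | inv_of x ih => rw [map_inv, map_inv]; exact inv_mem ih
  | mul x y ihx ihy => rw [map_mul, map_mul]; exact mul_mem ihx ihy


end QTensor

open QTensor in
/-- Invariance of the `q`-Schur multiplier `M^q = ker η` under weak `q`-exterior
isoclinism (`η : G ∧^q G → G` is the homomorphism with `η(g ∧ h) = [g,h]` and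
`η({(g,g)}) = g^q`, given here by its defining properties). -/
theorem qSchurMultiplier_iso_of_weak_qExteriorIsoclinic (q : ℕ)
    (G H : Type) [Group G] [Group H]
    (ηG : extSquare G q →* G)
    (hηG1 : ∀ g h : G, ηG (wmk G q g h) = g * h * g⁻¹ * h⁻¹)
    (hηG2 : ∀ g : G, ηG (dwmk G q g) = g ^ q)
    (ηH : extSquare H q →* H)
    (hηH1 : ∀ g h : H, ηH (wmk H q g h) = g * h * g⁻¹ * h⁻¹)
    (hηH2 : ∀ g : H, ηH (dwmk H q g) = g ^ q)
    -- weak q-exterior isoclinism data: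
    (A : Subgroup G) (B : Subgroup H) [A.Normal] [B.Normal]
    (hA : (A : Set G) ⊆ Eext G q) (hB : (B : Set H) ⊆ Eext H q)
    (α : (G ⧸ A) ≃* (H ⧸ B)) (β : qPowComm G q ≃* qPowComm H q)
    (hαβ : ∀ (g₁ g₂ : G) (h₁ h₂ : H),
      α (QuotientGroup.mk g₁) = QuotientGroup.mk h₁ →
      α (QuotientGroup.mk g₂) = QuotientGroup.mk h₂ →
      ((β ⟨g₁ * g₂ * g₁⁻¹ * g₂⁻¹, commutator_mem_qPowComm G q g₁ g₂⟩ : qPowComm H q) : H)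
          = h₁ * h₂ * h₁⁻¹ * h₂⁻¹ ∧
      ((β ⟨g₁ ^ q, pow_mem_qPowComm G q g₁⟩ : qPowComm H q) : H) = h₁ ^ q) :
    Nonempty (ηG.ker ≃* ηH.ker) := by
  classical
  let τ₁ : G →* H ⧸ B := α.toMonoidHom.comp (QuotientGroup.mk' A)
  let τ₂ : H →* G ⧸ A := α.symm.toMonoidHom.comp (QuotientGroup.mk' B)
  have mkrep1 : ∀ g : G, (QuotientGroup.mk (rep τ₁ g) : H ⧸ B) = α (QuotientGroup.mk g) :=
    fun g => mk_rep τ₁ g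
  have mkrep2 : ∀ h : H, (QuotientGroup.mk (rep τ₂ h) : G ⧸ A) = α.symm (QuotientGroup.mk h) :=
    fun h => mk_rep τ₂ h
  have hαrep2 : ∀ h : H, α (QuotientGroup.mk (rep τ₂ h)) = QuotientGroup.mk h := by
    intro h; rw [mkrep2]; exact α.apply_symm_apply _
  -- β on commutators and powers
  have hβc : ∀ g₁ g₂ : G,
      ((β ⟨g₁ * g₂ * g₁⁻¹ * g₂⁻¹, commutator_mem_qPowComm G q g₁ g₂⟩ : qPowComm H q) : H)
        = rep τ₁ g₁ * rep τ₁ g₂ * (rep τ₁ g₁)⁻¹ * (rep τ₁ g₂)⁻¹ :=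
    fun g₁ g₂ => (hαβ g₁ g₂ _ _ (mkrep1 g₁).symm (mkrep1 g₂).symm).1
  have hβp : ∀ g : G,
      ((β ⟨g ^ q, pow_mem_qPowComm G q g⟩ : qPowComm H q) : H) = (rep τ₁ g) ^ q :=
    fun g => (hαβ g g _ _ (mkrep1 g).symm (mkrep1 g).symm).2
  have hβc' : ∀ h₁ h₂ : H,
      β.symm ⟨h₁ * h₂ * h₁⁻¹ * h₂⁻¹, commutator_mem_qPowComm H q h₁ h₂⟩
        = ⟨rep τ₂ h₁ * rep τ₂ h₂ * (rep τ₂ h₁)⁻¹ * (rep τ₂ h₂)⁻¹,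
            commutator_mem_qPowComm G q _ _⟩ := by
    intro h₁ h₂
    have h := (hαβ (rep τ₂ h₁) (rep τ₂ h₂) h₁ h₂ (hαrep2 h₁) (hαrep2 h₂)).1
    have h' : β ⟨rep τ₂ h₁ * rep τ₂ h₂ * (rep τ₂ h₁)⁻¹ * (rep τ₂ h₂)⁻¹,
        commutator_mem_qPowComm G q _ _⟩
        = ⟨h₁ * h₂ * h₁⁻¹ * h₂⁻¹, commutator_mem_qPowComm H q h₁ h₂⟩ := Subtype.ext h
    rw [← h', MulEquiv.symm_apply_apply]
  have hβp' : ∀ h : H,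
      β.symm ⟨h ^ q, pow_mem_qPowComm H q h⟩
        = ⟨(rep τ₂ h) ^ q, pow_mem_qPowComm G q _⟩ := by
    intro h
    have hh := (hαβ (rep τ₂ h) (rep τ₂ h) h h (hαrep2 h) (hαrep2 h)).2
    have h' : β ⟨(rep τ₂ h) ^ q, pow_mem_qPowComm G q _⟩
        = ⟨h ^ q, pow_mem_qPowComm H q h⟩ := Subtype.ext hh
    rw [← h', MulEquiv.symm_apply_apply]
  -- the corestrictions of the η's
  let ηG' : extSquare G q →* qPowComm G q :=
    ηG.codRestrict _ (eta_mem_qPowComm q ηG hηG1 hηG2)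
  let ηH' : extSquare H q →* qPowComm H q :=
    ηH.codRestrict _ (eta_mem_qPowComm q ηH hηH1 hηH2)
  -- compatibility of Φ with η
  have keyG : ∀ x : extSquare G q,
      ηH (Phi q B hB τ₁ x) = ((β (ηG' x) : qPowComm H q) : H) := by
    have hcomp : ηH.comp (Phi q B hB τ₁)
        = (qPowComm H q).subtype.comp (β.toMonoidHom.comp ηG') := by
      apply hom_ext q
      · intro g h
        simp only [MonoidHom.comp_apply, MulEquiv.coe_toMonoidHom, Subgroup.coe_subtype]
        rw [Phi_wmk q B hB τ₁ g h, hηH1]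
        have e : ηG' (wmk G q g h)
            = ⟨g * h * g⁻¹ * h⁻¹, commutator_mem_qPowComm G q g h⟩ :=
          Subtype.ext (hηG1 g h)
        rw [e]
        exact (hβc g h).symm
      · intro g
        simp only [MonoidHom.comp_apply, MulEquiv.coe_toMonoidHom, Subgroup.coe_subtype]
        rw [Phi_dwmk q B hB τ₁ g, hηH2]
        have e : ηG' (dwmk G q g) = ⟨g ^ q, pow_mem_qPowComm G q g⟩ :=
          Subtype.ext (hηG2 g)
        rw [e]
        exact (hβp g).symm
    intro x
    exact DFunLike.congr_fun hcomp x
  have keyH : ∀ y : extSquare H q,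
      ηG (Phi q A hA τ₂ y) = ((β.symm (ηH' y) : qPowComm G q) : G) := by
    have hcomp : ηG.comp (Phi q A hA τ₂)
        = (qPowComm G q).subtype.comp (β.symm.toMonoidHom.comp ηH') := by
      apply hom_ext q
      · intro g h
        simp only [MonoidHom.comp_apply, MulEquiv.coe_toMonoidHom, Subgroup.coe_subtype]
        rw [Phi_wmk q A hA τ₂ g h, hηG1]
        have e : ηH' (wmk H q g h)
            = ⟨g * h * g⁻¹ * h⁻¹, commutator_mem_qPowComm H q g h⟩ :=
          Subtype.ext (hηH1 g h)
        rw [e, hβc' g h]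
      · intro g
        simp only [MonoidHom.comp_apply, MulEquiv.coe_toMonoidHom, Subgroup.coe_subtype]
        rw [Phi_dwmk q A hA τ₂ g, hηG2]
        have e : ηH' (dwmk H q g) = ⟨g ^ q, pow_mem_qPowComm H q g⟩ :=
          Subtype.ext (hηH2 g)
        rw [e, hβp' g]
    intro y
    exact DFunLike.congr_fun hcomp y
  -- the two composites are the identity
  have hΨΦ : ∀ x : extSquare G q, Phi q A hA τ₂ (Phi q B hB τ₁ x) = x := by
    have hcomp : (Phi q A hA τ₂).comp (Phi q B hB τ₁) = MonoidHom.id _ := by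
      apply hom_ext q
      · intro g h
        simp only [MonoidHom.comp_apply, MonoidHom.id_apply]
        rw [Phi_wmk q B hB τ₁ g h, Phi_wmk q A hA τ₂]
        exact wd q A hA
          (by rw [mkrep2, mkrep1]; exact α.symm_apply_apply _)
          (by rw [mkrep2, mkrep1]; exact α.symm_apply_apply _)
      · intro g
        simp only [MonoidHom.comp_apply, MonoidHom.id_apply]
        rw [Phi_dwmk q B hB τ₁ g, Phi_dwmk q A hA τ₂]
        exact dwd q A hA (by rw [mkrep2, mkrep1]; exact α.symm_apply_apply _)
    intro x
    exact DFunLike.congr_fun hcomp x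
  have hΦΨ : ∀ y : extSquare H q, Phi q B hB τ₁ (Phi q A hA τ₂ y) = y := by
    have hcomp : (Phi q B hB τ₁).comp (Phi q A hA τ₂) = MonoidHom.id _ := by
      apply hom_ext q
      · intro g h
        simp only [MonoidHom.comp_apply, MonoidHom.id_apply]
        rw [Phi_wmk q A hA τ₂ g h, Phi_wmk q B hB τ₁]
        exact wd q B hB
          (by rw [mkrep1]; exact hαrep2 _)
          (by rw [mkrep1]; exact hαrep2 _)
      · intro g
        simp only [MonoidHom.comp_apply, MonoidHom.id_apply]
        rw [Phi_dwmk q A hA τ₂ g, Phi_dwmk q B hB τ₁]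
        exact dwd q B hB (by rw [mkrep1]; exact hαrep2 _)
    intro y
    exact DFunLike.congr_fun hcomp y
  -- membership of images in the kernels
  have memH : ∀ x : extSquare G q, x ∈ ηG.ker → Phi q B hB τ₁ x ∈ ηH.ker := by
    intro x hx
    have hx' : ηG x = 1 := hx
    have h1 : ηG' x = 1 := Subtype.ext (by simpa [ηG'] using hx')
    rw [MonoidHom.mem_ker, keyG, h1, map_one, OneMemClass.coe_one]
  have memG : ∀ y : extSquare H q, y ∈ ηH.ker → Phi q A hA τ₂ y ∈ ηG.ker := by
    intro y hy
    have hy' : ηH y = 1 := hy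
    have h1 : ηH' y = 1 := Subtype.ext (by simpa [ηH'] using hy')
    rw [MonoidHom.mem_ker, keyH, h1, map_one, OneMemClass.coe_one]
  exact ⟨{ toFun := fun x => ⟨Phi q B hB τ₁ x.1, memH x.1 x.2⟩
           invFun := fun y => ⟨Phi q A hA τ₂ y.1, memG y.1 y.2⟩
           left_inv := fun x => Subtype.ext (hΨΦ x.1)
           right_inv := fun y => Subtype.ext (hΦΨ y.1)
           map_mul' := fun x y => Subtype.ext (map_mul (Phi q B hB τ₁) x.1 y.1) }⟩
end

section
/- If two groups G and H are exterior isoclinic, then their Schur multipliers are isomorphic: M(G) ≅ M(H). -/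
namespace QTensor

section Basic

variable {G : Type} [Group G]

/-- The canonical projection from the free group on the generators to the
exterior square. -/
def esMk (G : Type) [Group G] : FreeGroup (Gen G) →* extSquare G 0 :=
  (QuotientGroup.mk' (nabla G 0)).comp (PresentedGroup.mk (rels G 0))

lemma esMk_T (g h : G) : esMk G (T G g h) = wmk G 0 g h := rfl

lemma esMk_D (g : G) : esMk G (D G g) = dwmk G 0 g := rfl

lemma esMk_rel {r : FreeGroup (Gen G)} (hr : r ∈ rels G 0) : esMk G r = 1 := by
  have h1 : PresentedGroup.mk (rels G 0) r = (1 : tensorSquare G 0) :=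
    (QuotientGroup.eq_one_iff _).mpr (Subgroup.subset_normalClosure hr)
  show (QuotientGroup.mk' (nabla G 0)) (PresentedGroup.mk (rels G 0) r) = 1
  rw [h1, map_one]

lemma wmk_diag (g : G) : wmk G 0 g g = 1 :=
  (QuotientGroup.eq_one_iff _).mpr (Subgroup.subset_normalClosure ⟨g, rfl⟩)

lemma dwmk_eq_one (g : G) : dwmk G 0 g = 1 := by
  have := esMk_rel (G := G) (r := D G g) (Or.inr ⟨rfl, g, rfl⟩)
  rwa [esMk_D] at this

lemma wmk_R1 (g g₁ h : G) :
    wmk G 0 (g * g₁) h = wmk G 0 (g * g₁ * g⁻¹) (g * h * g⁻¹) * wmk G 0 g h := by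
  have hr : T G (g * g₁) h * (T G (g * g₁ * g⁻¹) (g * h * g⁻¹) * T G g h)⁻¹ ∈ rels G 0 :=
    Or.inl (Or.inl (Or.inl (Or.inl (Or.inl (Or.inl ⟨g, g₁, h, rfl⟩)))))
  have h1 := esMk_rel hr
  rw [map_mul, map_inv, mul_inv_eq_one, map_mul, esMk_T, esMk_T, esMk_T] at h1
  exact h1

lemma wmk_R2 (g h h₁ : G) :
    wmk G 0 g (h * h₁) = wmk G 0 g h * wmk G 0 (h * g * h⁻¹) (h * h₁ * h⁻¹) := by
  have hr : T G g (h * h₁) * (T G g h * T G (h * g * h⁻¹) (h * h₁ * h⁻¹))⁻¹ ∈ rels G 0 :=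
    Or.inl (Or.inl (Or.inl (Or.inl (Or.inl (Or.inr ⟨g, h, h₁, rfl⟩)))))
  have h1 := esMk_rel hr
  rw [map_mul, map_inv, mul_inv_eq_one, map_mul, esMk_T, esMk_T, esMk_T] at h1
  exact h1

lemma wmk_antisym (g k : G) : wmk G 0 k g * wmk G 0 g k = 1 := by
  set h := g⁻¹ * k * g with hh
  have hk : g * h * g⁻¹ = k := by rw [hh]; group
  have e1 : wmk G 0 (g * h) (g * h) = 1 := wmk_diag _
  have e2 := wmk_R2 (g * h) g h
  have e3 := wmk_R1 g h g
  have e4 := wmk_R1 g (g * h * g⁻¹) (g * h * g⁻¹)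
  have hgg : g * g * g⁻¹ = g := by group
  have hassoc : g * (g * h) * g⁻¹ = g * (g * h * g⁻¹) := by group
  rw [hgg, wmk_diag, mul_one, hk] at e3
  rw [wmk_diag, one_mul, hk] at e4
  rw [hassoc, hk] at e2
  rw [e3] at e2
  rw [e4] at e2
  rw [e2] at e1
  exact e1

end Basic

section Coset

variable {G : Type} [Group G] (Z : Subgroup G) [Z.Normal]

lemma wmk_left_one (hZ : (Z : Set G) = Zext G 0) {z : G} (hz : z ∈ Z) (h : G) : wmk G 0 z h = 1 := by
  have hz' : z ∈ Zext G 0 := by rw [← hZ]; exact hz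
  exact hz' h

lemma wmk_right_one (hZ : (Z : Set G) = Zext G 0) {z : G} (hz : z ∈ Z) (h : G) : wmk G 0 h z = 1 := by
  have h1 := wmk_antisym h z
  rw [wmk_left_one Z hZ hz h, one_mul] at h1
  exact h1

lemma wmk_congr_left (hZ : (Z : Set G) = Zext G 0) {a b : G} (hab : (QuotientGroup.mk a : G ⧸ Z) = QuotientGroup.mk b)
    (c : G) : wmk G 0 a c = wmk G 0 b c := by
  have hz : b⁻¹ * a ∈ Z := by
    have := hab.symm
    rwa [QuotientGroup.eq] at this
  have hrw : a = b * (b⁻¹ * a) := by group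
  rw [hrw, wmk_R1,
    wmk_left_one Z hZ (Subgroup.Normal.conj_mem ‹Z.Normal› _ hz b) _, one_mul]

lemma wmk_congr_right (hZ : (Z : Set G) = Zext G 0) {a b : G} (hab : (QuotientGroup.mk a : G ⧸ Z) = QuotientGroup.mk b)
    (c : G) : wmk G 0 c a = wmk G 0 c b := by
  have hz : b⁻¹ * a ∈ Z := by
    have := hab.symm
    rwa [QuotientGroup.eq] at this
  have hrw : a = b * (b⁻¹ * a) := by group
  rw [hrw, wmk_R2,
    wmk_right_one Z hZ (Subgroup.Normal.conj_mem ‹Z.Normal› _ hz b) _, mul_one]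

lemma wmk_congr (hZ : (Z : Set G) = Zext G 0) {a a' b b' : G}
    (ha : (QuotientGroup.mk a : G ⧸ Z) = QuotientGroup.mk a')
    (hb : (QuotientGroup.mk b : G ⧸ Z) = QuotientGroup.mk b') :
    wmk G 0 a b = wmk G 0 a' b' := by
  rw [wmk_congr_left Z hZ ha, wmk_congr_right Z hZ hb]

end Coset

section Hom

variable {G H : Type} [Group G] [Group H]

/-- The candidate image of the generators. -/
def liftFun (u : G → H) : Gen G → extSquare H 0
  | Gen.t g h => wmk H 0 (u g) (u h)
  | Gen.d _ => 1

lemma liftFun_t (u : G → H) (g h : G) :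
    liftFun u (Gen.t g h) = wmk H 0 (u g) (u h) := rfl

lemma liftFun_d (u : G → H) (g : G) : liftFun u (Gen.d g) = 1 := rfl

/-- Extension of a homomorphism of central quotients to a homomorphism of
exterior squares. -/
theorem exists_extSquare_hom (ZG : Subgroup G) [ZG.Normal] (hZG : (ZG : Set G) = Zext G 0)
    (ZH : Subgroup H) [ZH.Normal] (hZH : (ZH : Set H) = Zext H 0)
    (α : (G ⧸ ZG) →* (H ⧸ ZH)) :
    ∃ φ : extSquare G 0 →* extSquare H 0, ∀ (g h : G) (a b : H),
      α (QuotientGroup.mk g) = QuotientGroup.mk a →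
      α (QuotientGroup.mk h) = QuotientGroup.mk b →
      φ (wmk G 0 g h) = wmk H 0 a b := by
  classical
  set u : G → H := fun g => (α (QuotientGroup.mk g)).out with hu_def
  have hu : ∀ g : G, (QuotientGroup.mk (u g) : H ⧸ ZH) = α (QuotientGroup.mk g) := by
    intro g; exact QuotientGroup.out_eq' _
  have hft := liftFun_t (G := G) (H := H)
  have hfd := liftFun_d (G := G) (H := H)
  have humul : ∀ g g' : G,
      (QuotientGroup.mk (u (g * g')) : H ⧸ ZH) = QuotientGroup.mk (u g * u g') := by
    intro g g'
    have h1 : (QuotientGroup.mk (g * g') : G ⧸ ZG) =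
        QuotientGroup.mk g * QuotientGroup.mk g' := rfl
    have h2 : (QuotientGroup.mk (u g * u g') : H ⧸ ZH) =
        QuotientGroup.mk (u g) * QuotientGroup.mk (u g') := rfl
    rw [hu, h1, h2, map_mul, hu, hu]
  have huconj : ∀ g g' : G,
      (QuotientGroup.mk (u (g * g' * g⁻¹)) : H ⧸ ZH) =
        QuotientGroup.mk (u g * u g' * (u g)⁻¹) := by
    intro g g'
    have h1 : (QuotientGroup.mk (g * g' * g⁻¹) : G ⧸ ZG) =
        QuotientGroup.mk g * QuotientGroup.mk g' * (QuotientGroup.mk g)⁻¹ := rfl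
    have h2 : (QuotientGroup.mk (u g * u g' * (u g)⁻¹) : H ⧸ ZH) =
        QuotientGroup.mk (u g) * QuotientGroup.mk (u g') *
          (QuotientGroup.mk (u g))⁻¹ := rfl
    rw [hu, h1, h2, map_mul, map_mul, map_inv, hu, hu]
  have hu1 : (QuotientGroup.mk (u 1) : H ⧸ ZH) = QuotientGroup.mk (1 : H) := by
    rw [hu]; simp
  have hrels : ∀ r ∈ rels G 0, FreeGroup.lift (liftFun u) r = 1 := by
    rintro r (((((((⟨g, g₁, h, rfl⟩ | ⟨g, h, h₁, rfl⟩) | ⟨g, g₁, h₁, rfl⟩) |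
      ⟨g, g₁, rfl⟩) | ⟨g, g₁, rfl⟩) | ⟨g, h, rfl⟩) | ⟨-, g, rfl⟩))
    · rw [map_mul, map_inv, mul_inv_eq_one, map_mul]
      simp only [T, FreeGroup.lift_apply_of, liftFun_t]
      rw [wmk_congr_left ZH hZH (humul g g₁),
        wmk_congr ZH hZH (huconj g g₁) (huconj g h)]
      exact wmk_R1 (u g) (u g₁) (u h)
    · rw [map_mul, map_inv, mul_inv_eq_one, map_mul]
      simp only [T, FreeGroup.lift_apply_of, liftFun_t]
      rw [wmk_congr_right ZH hZH (humul h h₁),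
        wmk_congr ZH hZH (huconj h g) (huconj h h₁)]
      exact wmk_R2 (u g) (u h) (u h₁)
    · simp only [pow_zero, one_mul, inv_one, mul_one, map_mul, map_inv, T, D,
        FreeGroup.lift_apply_of, liftFun_t, liftFun_d]
      group
    · have hprod : relProd G 0 g g₁ = 1 := by
        simp [relProd]
      rw [hprod]
      simp only [map_mul, map_inv, map_one, mul_one, D, FreeGroup.lift_apply_of, liftFun_d]
      group
    · have h11 : wmk H 0 (u 1) (u 1) = 1 := by
        rw [wmk_congr ZH hZH hu1 hu1]
        exact wmk_diag 1
      simp only [pow_zero, map_mul, map_inv, T, D, FreeGroup.lift_apply_of, liftFun_t,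
        liftFun_d, h11]
      group
    · simp only [pow_zero, inv_one, mul_one, map_mul, D, FreeGroup.lift_apply_of, liftFun_d]
    · simp only [D, FreeGroup.lift_apply_of, liftFun_d]
  set φ₀ : tensorSquare G 0 →* extSquare H 0 := PresentedGroup.toGroup hrels with hφ₀
  have hφ₀t : ∀ g h : G, φ₀ (tmk G 0 g h) = wmk H 0 (u g) (u h) := by
    intro g h
    exact PresentedGroup.toGroup.of hrels
  have hnab : nabla G 0 ≤ φ₀.ker := by
    apply Subgroup.normalClosure_le_normal
    rintro x ⟨g, rfl⟩
    show φ₀ (tmk G 0 g g) = 1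
    rw [hφ₀t g g]
    exact wmk_diag (u g)
  refine ⟨QuotientGroup.lift (nabla G 0) φ₀ (fun x hx => hnab hx), ?_⟩
  intro g h a b ha hb
  show φ₀ (tmk G 0 g h) = wmk H 0 a b
  rw [hφ₀t g h]
  apply wmk_congr ZH hZH
  · rw [hu, ha]
  · rw [hu, hb]

/-- Extensionality for homomorphisms out of the exterior square. -/
lemma extSquare_hom_ext {M : Type} [Group M] {f₁ f₂ : extSquare G 0 →* M}
    (hw : ∀ g h : G, f₁ (wmk G 0 g h) = f₂ (wmk G 0 g h)) : f₁ = f₂ := by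
  have key : f₁.comp (QuotientGroup.mk' (nabla G 0)) =
      f₂.comp (QuotientGroup.mk' (nabla G 0)) := by
    apply PresentedGroup.ext
    intro x
    cases x with
    | t g h => exact hw g h
    | d g =>
      show f₁ (dwmk G 0 g) = f₂ (dwmk G 0 g)
      rw [dwmk_eq_one, map_one, map_one]
  ext x
  obtain ⟨y, rfl⟩ := QuotientGroup.mk'_surjective (nabla G 0) x
  exact DFunLike.congr_fun key y

/-- Induction principle for the exterior square. -/
lemma extSquare_induction {C : extSquare G 0 → Prop}
    (hw : ∀ g h : G, C (wmk G 0 g h)) (h1 : C 1)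
    (hm : ∀ x y, C x → C y → C (x * y)) (hi : ∀ x, C x → C x⁻¹) :
    ∀ x, C x := by
  have key : ∀ w : FreeGroup (Gen G), C (esMk G w) := by
    intro w
    induction w using FreeGroup.induction_on with
    | C1 => rw [map_one]; exact h1
    | of x =>
      cases x with
      | t g h => exact hw g h
      | d g =>
        show C (dwmk G 0 g)
        rw [dwmk_eq_one]
        exact h1
    | inv_of x hx => rw [map_inv]; exact hi _ hx
    | mul x y hx hy => rw [map_mul]; exact hm _ _ hx hy
  intro x
  obtain ⟨y, rfl⟩ := QuotientGroup.mk'_surjective (nabla G 0) x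
  obtain ⟨w, rfl⟩ := PresentedGroup.mk_surjective (rels G 0) y
  exact key w

end Hom

end QTensor

open QTensor in
open scoped commutatorElement in
/-- If `G` and `H` are exterior isoclinic, then `M(G) ≅ M(H)`, where the Schur
multiplier `M(G)` is the kernel of `η : G ∧ G → G`, `η(g ∧ h) = [g,h]`. -/
theorem schurMultiplier_iso_of_exteriorIsoclinic (G H : Type) [Group G] [Group H]
    (ηG : extSquare G 0 →* G)
    (hηG : ∀ g h : G, ηG (wmk G 0 g h) = g * h * g⁻¹ * h⁻¹)
    (ηH : extSquare H 0 →* H)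
    (hηH : ∀ g h : H, ηH (wmk H 0 g h) = g * h * g⁻¹ * h⁻¹)
    -- the exterior centers, as (necessarily normal) subgroups:
    (ZG : Subgroup G) [ZG.Normal] (hZG : (ZG : Set G) = Zext G 0)
    (ZH : Subgroup H) [ZH.Normal] (hZH : (ZH : Set H) = Zext H 0)
    -- exterior isoclinism data:
    (α : (G ⧸ ZG) ≃* (H ⧸ ZH)) (β : commutator G ≃* commutator H)
    (hαβ : ∀ (g₁ g₂ : G) (h₁ h₂ : H),
      α (QuotientGroup.mk g₁) = QuotientGroup.mk h₁ →
      α (QuotientGroup.mk g₂) = QuotientGroup.mk h₂ →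
      ((β ⟨⁅g₁, g₂⁆, mem_commutator G g₁ g₂⟩ : commutator H) : H) = ⁅h₁, h₂⁆) :
    Nonempty (ηG.ker ≃* ηH.ker) := by
  classical
  -- construct the two homomorphisms between exterior squares
  obtain ⟨φ, hφ⟩ := exists_extSquare_hom ZG hZG ZH hZH α.toMonoidHom
  obtain ⟨ψ, hψ⟩ := exists_extSquare_hom ZH hZH ZG hZG α.symm.toMonoidHom
  -- lift/section data
  have lift : ∀ g : G, ∃ a : H, α (QuotientGroup.mk g) = QuotientGroup.mk a := by
    intro g
    exact ⟨(α (QuotientGroup.mk g)).out, (QuotientGroup.out_eq' _).symm⟩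
  -- mutual inverse
  have hψφ : ψ.comp φ = MonoidHom.id (extSquare G 0) := by
    apply extSquare_hom_ext
    intro g h
    obtain ⟨a, ha⟩ := lift g
    obtain ⟨b, hb⟩ := lift h
    have h1 : ψ (φ (wmk G 0 g h)) = ψ (wmk H 0 a b) := by rw [hφ g h a b ha hb]
    have h2 : ψ (wmk H 0 a b) = wmk G 0 g h := by
      apply hψ a b g h
      · rw [← ha]; exact α.symm_apply_apply _
      · rw [← hb]; exact α.symm_apply_apply _
    show ψ (φ (wmk G 0 g h)) = wmk G 0 g h
    rw [h1, h2]
  have hφψ : φ.comp ψ = MonoidHom.id (extSquare H 0) := by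
    apply extSquare_hom_ext
    intro a b
    obtain ⟨g, hg⟩ : ∃ g : G, α.symm (QuotientGroup.mk a) = QuotientGroup.mk g :=
      ⟨(α.symm (QuotientGroup.mk a)).out, (QuotientGroup.out_eq' _).symm⟩
    obtain ⟨h, hh⟩ : ∃ h : G, α.symm (QuotientGroup.mk b) = QuotientGroup.mk h :=
      ⟨(α.symm (QuotientGroup.mk b)).out, (QuotientGroup.out_eq' _).symm⟩
    have h1 : ψ (wmk H 0 a b) = wmk G 0 g h := hψ a b g h hg hh
    have h2 : φ (wmk G 0 g h) = wmk H 0 a b := by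
      apply hφ g h a b
      · rw [← hg]; exact α.apply_symm_apply _
      · rw [← hh]; exact α.apply_symm_apply _
    show φ (ψ (wmk H 0 a b)) = wmk H 0 a b
    rw [h1, h2]
  -- the isomorphism of exterior squares
  let e : extSquare G 0 ≃* extSquare H 0 :=
    { toFun := φ, invFun := ψ,
      left_inv := fun x => DFunLike.congr_fun hψφ x,
      right_inv := fun x => DFunLike.congr_fun hφψ x,
      map_mul' := φ.map_mul }
  -- ηG lands in the commutator subgroup
  have hcod : ∀ x : extSquare G 0, ηG x ∈ commutator G := by
    apply extSquare_induction
    · intro g h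
      rw [hηG]
      have := mem_commutator G g h
      rwa [commutatorElement_def] at this
    · rw [map_one]; exact one_mem _
    · intro x y hx hy; rw [map_mul]; exact mul_mem hx hy
    · intro x hx; rw [map_inv]; exact inv_mem hx
  let ηG' : extSquare G 0 →* commutator G := ηG.codRestrict (commutator G) hcod
  -- key compatibility: ηH ∘ φ = ι ∘ β ∘ ηG'
  have hkey : ηH.comp φ =
      ((commutator H).subtype.comp β.toMonoidHom).comp ηG' := by
    apply extSquare_hom_ext
    intro g h
    obtain ⟨a, ha⟩ := lift g
    obtain ⟨b, hb⟩ := lift h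
    have h1 : ηH (φ (wmk G 0 g h)) = a * b * a⁻¹ * b⁻¹ := by
      rw [hφ g h a b ha hb, hηH]
    have h2 : ηG' (wmk G 0 g h) = ⟨⁅g, h⁆, mem_commutator G g h⟩ := by
      apply Subtype.ext
      show ηG (wmk G 0 g h) = ⁅g, h⁆
      rw [hηG, commutatorElement_def]
    show ηH (φ (wmk G 0 g h)) = ((β (ηG' (wmk G 0 g h)) : commutator H) : H)
    rw [h1, h2, hαβ g h a b ha hb, commutatorElement_def]
  have hkeyx : ∀ x : extSquare G 0,
      ηH (φ x) = ((β (ηG' x) : commutator H) : H) := fun x =>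
    DFunLike.congr_fun hkey x
  -- kernels correspond
  have hker : ∀ x : extSquare G 0, ηG x = 1 ↔ ηH (φ x) = 1 := by
    intro x
    constructor
    · intro hx
      rw [hkeyx]
      have hx' : ηG' x = 1 := Subtype.ext hx
      rw [hx', map_one, OneMemClass.coe_one]
    · intro hx
      rw [hkeyx] at hx
      have hb1 : (β (ηG' x) : commutator H) = 1 := Subtype.ext hx
      have h1 : ηG' x = 1 := by
        apply β.injective
        rw [hb1, map_one]
      have := congrArg (Subtype.val) h1
      exact this
  have hmap : ηG.ker.map (e : extSquare G 0 →* extSquare H 0) = ηH.ker := by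
    ext x
    constructor
    · rintro ⟨y, hy, rfl⟩
      exact (hker y).mp hy
    · intro hx
      refine ⟨ψ x, ?_, ?_⟩
      · have hφψx : φ (ψ x) = x := DFunLike.congr_fun hφψ x
        exact (hker (ψ x)).mpr (by rw [hφψx]; exact hx)
      · exact DFunLike.congr_fun hφψ x
  exact ⟨(e.subgroupMap ηG.ker).trans (MulEquiv.subgroupCongr hmap)⟩
end
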